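/- Let C ⊆ [0,R] be measurable with the Lebesgue measure of [0,R] \ C at most δ > 0. For any g > 0 and any natural number n with n·g > δ and n ≥ 1, dividing [0,R] into n consecutive closed subintervals of equal length R/n, at least one subinterval I has the property that every open subinterval of I of length g contains a point of C. -/
import Mathlib


open MeasureTheory

/-- Pigeonhole lemma on KAM gaps: if `C ⊆ [0,R]` has complement in `[0,R]` of measure
at most `δ`, and `n·g > δ`, then among the `n` consecutive subintervals of `[0,R]` of
equal length there is one, `I`, such that every open subinterval of `I` of length `g`
contains a point of `C`. -/
theorem kam_gaps_pigeonhole (R δ g : ℝ) (C : Set ℝ)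
    (hC : MeasurableSet C) (hCsub : C ⊆ Set.Icc 0 R)
    (hδ : 0 < δ) (hmeas : volume (Set.Icc 0 R \ C) ≤ ENNReal.ofReal δ)
    (hg : 0 < g) (n : ℕ) (hn : 1 ≤ n) (hng : δ < n * g) :
    ∃ k : Fin n, ∀ a : ℝ,
      Set.Icc a (a + g) ⊆ Set.Icc ((k : ℝ) * R / n) (((k : ℝ) + 1) * R / n) →
      (Set.Ioo a (a + g) ∩ C).Nonempty := by
  have hn0 : (0:ℝ) < n := by exact_mod_cast Nat.lt_of_lt_of_le Nat.zero_lt_one hn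
  rcases lt_or_ge R 0 with hR | hR
  · refine ⟨⟨0, hn⟩, fun a h => ?_⟩
    exfalso
    have := h (Set.left_mem_Icc.2 (by linarith))
    simp only [Fin.val_mk, Nat.cast_zero, zero_mul, zero_div, zero_add, one_mul] at this
    have h1 : (0:ℝ) ≤ a := this.1
    have h2 : a ≤ R / n := this.2
    have : R / n < 0 := div_neg_of_neg_of_pos hR hn0
    linarith
  · by_contra hcon
    push_neg at hcon
    choose a hsub hempty using hcon
    -- bounds
    have hlow : ∀ k : Fin n, ((k:ℝ) * R / n) ≤ a k := fun k =>
      (hsub k (Set.left_mem_Icc.2 (by linarith))).1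
    have hhigh : ∀ k : Fin n, a k + g ≤ ((k:ℝ) + 1) * R / n := fun k =>
      (hsub k (Set.right_mem_Icc.2 (by linarith))).2
    -- each Ioo ⊆ Icc 0 R \ C
    have hsub2 : ∀ k : Fin n, Set.Ioo (a k) (a k + g) ⊆ Set.Icc 0 R \ C := by
      intro k x hx
      constructor
      · constructor
        · have : (0:ℝ) ≤ (k:ℝ) * R / n :=
            div_nonneg (mul_nonneg (Nat.cast_nonneg _) hR) hn0.le
          linarith [hlow k, hx.1]
        · have hk1 : ((k:ℝ) + 1) ≤ n := by exact_mod_cast k.2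
          have : ((k:ℝ) + 1) * R / n ≤ R := by
            rw [div_le_iff₀ hn0]
            nlinarith
          linarith [hhigh k, hx.2]
      · intro hxC
        exact Set.eq_empty_iff_forall_notMem.1 (hempty k) x ⟨hx, hxC⟩
    -- pairwise disjoint
    have hdisj : Pairwise (Function.onFun Disjoint fun k : Fin n => Set.Ioo (a k) (a k + g)) := by
      have key : ∀ j k : Fin n, (j:ℕ) < (k:ℕ) →
          Disjoint (Set.Ioo (a j) (a j + g)) (Set.Ioo (a k) (a k + g)) := by
        intro j k hjk
        apply Set.disjoint_left.2
        intro x hxj hxk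
        have h1 : ((j:ℝ) + 1) ≤ (k:ℝ) := by exact_mod_cast hjk
        have h2 : ((j:ℝ) + 1) * R / n ≤ (k:ℝ) * R / n := by
          gcongr
        linarith [hhigh j, hlow k, hxj.2, hxk.1]
      intro j k hjk
      rcases lt_or_gt_of_ne (fun h => hjk (Fin.ext h) : (j:ℕ) ≠ (k:ℕ)) with h | h
      · exact key j k h
      · exact (key k j h).symm
    have hmeasU : volume (⋃ k : Fin n, Set.Ioo (a k) (a k + g)) = n * ENNReal.ofReal g := by
      rw [measure_iUnion hdisj (fun k => measurableSet_Ioo)]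
      simp [Real.volume_Ioo, add_sub_cancel_left, tsum_fintype, Finset.sum_const,
        Finset.card_univ, nsmul_eq_mul]
    have hUsub : (⋃ k : Fin n, Set.Ioo (a k) (a k + g)) ⊆ Set.Icc 0 R \ C :=
      Set.iUnion_subset hsub2
    have hle : (n : ENNReal) * ENNReal.ofReal g ≤ ENNReal.ofReal δ := by
      rw [← hmeasU]
      exact le_trans (measure_mono hUsub) hmeas
    have : ENNReal.ofReal (n * g) ≤ ENNReal.ofReal δ := by
      rw [ENNReal.ofReal_mul (by positivity)]
      simpa [ENNReal.ofReal_natCast] using hle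
    have := (ENNReal.ofReal_le_ofReal_iff hδ.le).1 this
    linarith
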